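/- Let C be a category with a stable system of monics M that has pushouts along M-morphisms, such that M-morphisms are stable under pushout. Then the source functor S : PO_v(C, M) → C|_M from the category of pushout squares along M-morphisms (under vertical composition) is a Grothendieck opfibration, with op-Cartesian liftings provided by pushouts. -/

import Mathlib

open CategoryTheory CategoryTheory.Limits

universe v u

variable {C : Type u} [Category.{v} C]

/-- A stable system of monics. -/
structure StableSystemOfMonics (C : Type u) [Category.{v} C] where
  P : MorphismProperty C
  mono_of : ∀ {X Y : C} (f : X ⟶ Y), P f → Mono f
  iso_mem : ∀ {X Y : C} (f : X ⟶ Y), IsIso f → P f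
  comp_mem : ∀ {X Y Z : C} (f : X ⟶ Y) (g : Y ⟶ Z), P f → P g → P (f ≫ g)
  pullback_stable : ∀ {W X Y Z : C} (f' : W ⟶ X) (m' : W ⟶ Y) (m : X ⟶ Z) (f : Y ⟶ Z),
    P m → IsPullback f' m' m f → P m'

/-- `C` has pushouts along `M`-morphisms. -/
def HasPushoutsAlongM (M : StableSystemOfMonics C) : Prop :=
  ∀ {X Y Z : C} (f : X ⟶ Y) (m : X ⟶ Z), M.P m →
    ∃ (W : C) (inl : Y ⟶ W) (inr : Z ⟶ W), IsPushout f m inl inr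

/-- `M`-morphisms are stable under pushout. -/
def MStableUnderPushout (M : StableSystemOfMonics C) : Prop :=
  ∀ {X Y Z W : C} (f : X ⟶ Y) (m : X ⟶ Z) (inl : Y ⟶ W) (inr : Z ⟶ W),
    M.P m → IsPushout f m inl inr → M.P inl

/-- Objects of `PO_v(C, M)`: arbitrary morphisms of `C`. -/
structure VObj (M : StableSystemOfMonics C) where
  dom : C
  cod : C
  hom : dom ⟶ cod

variable {M : StableSystemOfMonics C}

/-- Morphisms of `PO_v(C, M)`: pushout squares whose vertical sides are in `M`. -/
@[ext]
structure POvHom (f g : VObj M) where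
  src : f.dom ⟶ g.dom
  tgt : f.cod ⟶ g.cod
  srcM : M.P src
  tgtM : M.P tgt
  isPO : IsPushout f.hom src tgt g.hom

instance : Category (VObj M) where
  Hom f g := POvHom f g
  id f := ⟨𝟙 _, 𝟙 _, M.iso_mem _ inferInstance, M.iso_mem _ inferInstance,
    IsPushout.of_vert_isIso ⟨by simp⟩⟩
  comp φ ψ := ⟨φ.src ≫ ψ.src, φ.tgt ≫ ψ.tgt, M.comp_mem _ _ φ.srcM ψ.srcM,
    M.comp_mem _ _ φ.tgtM ψ.tgtM, φ.isPO.paste_vert ψ.isPO⟩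
  id_comp φ := POvHom.ext (by dsimp; simp) (by dsimp; simp)
  comp_id φ := POvHom.ext (by dsimp; simp) (by dsimp; simp)
  assoc φ ψ χ := POvHom.ext (by dsimp; simp) (by dsimp; simp)

/-- The subcategory `C|_M` of `C` with only `M`-morphisms. -/
def MCat (_ : StableSystemOfMonics C) : Type u := C

instance : Category (MCat M) where
  Hom X Y := {f : (show C from X) ⟶ (show C from Y) // M.P f}
  id X := ⟨𝟙 _, M.iso_mem _ inferInstance⟩
  comp f g := ⟨f.1 ≫ g.1, M.comp_mem _ _ f.2 g.2⟩
  id_comp f := Subtype.ext (Category.id_comp f.1)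
  comp_id f := Subtype.ext (Category.comp_id f.1)
  assoc f g h := Subtype.ext (Category.assoc f.1 g.1 h.1)

/-- The source functor `S : PO_v(C, M) ⥤ C|_M`, sending a pushout square to its
domain-side vertical `M`-morphism. -/
def sourceFunctor (M : StableSystemOfMonics C) : VObj M ⥤ MCat M where
  obj f := (f.dom : MCat M)
  map φ := ⟨φ.src, φ.srcM⟩
  map_id _ := rfl
  map_comp _ _ := rfl

section Opfibration

universe v₁ v₂ u₁ u₂

variable {E : Type u₁} [Category.{v₁} E] {B : Type u₂} [Category.{v₂} B]

/-- Op-Cartesian morphism for a functor `G`. -/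
def IsOpCartesianLift (G : E ⥤ B) {e e' : E} (φ : e ⟶ e') : Prop :=
  ∀ ⦃e'' : E⦄ (α : e ⟶ e'') (g : G.obj e' ⟶ G.obj e''),
    G.map α = G.map φ ≫ g → ∃! β : e' ⟶ e'', φ ≫ β = α ∧ G.map β = g

/-- `G : E ⥤ B` is a Grothendieck opfibration. -/
def IsGrothendieckOpfibration (G : E ⥤ B) : Prop :=
  ∀ ⦃e : E⦄ ⦃b' : B⦄ (f : G.obj e ⟶ b'),
    ∃ (e' : E) (φ : e ⟶ e') (h : G.obj e' = b'),
      G.map φ ≫ eqToHom h = f ∧ IsOpCartesianLift G φ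

end Opfibration

/-- If `C` has pushouts along `M`-morphisms and `M`-morphisms are stable under
pushout, then the source functor `S : PO_v(C, M) ⥤ C|_M` is a Grothendieck
opfibration, with op-Cartesian liftings provided by pushouts. -/
theorem sourceFunctor_POv_isGrothendieckOpfibration (M : StableSystemOfMonics C)
    (hpo : HasPushoutsAlongM M) (hstable : MStableUnderPushout M) :
    IsGrothendieckOpfibration (sourceFunctor M) ∧
    ∀ (f : VObj M) ⦃X : C⦄ (m : f.dom ⟶ X) (hm : M.P m),
      ∃ (W : C) (inl : f.cod ⟶ W) (inr : X ⟶ W) (hinl : M.P inl)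
        (hPO : IsPushout f.hom m inl inr),
        IsOpCartesianLift (sourceFunctor M)
          (show f ⟶ (⟨X, W, inr⟩ : VObj M) from ⟨m, inl, hm, hinl, hPO⟩) := by
  have key : ∀ (f : VObj M) ⦃X : C⦄ (m : f.dom ⟶ X) (hm : M.P m),
      ∃ (W : C) (inl : f.cod ⟶ W) (inr : X ⟶ W) (hinl : M.P inl)
        (hPO : IsPushout f.hom m inl inr),
        IsOpCartesianLift (sourceFunctor M)
          (show f ⟶ (⟨X, W, inr⟩ : VObj M) from ⟨m, inl, hm, hinl, hPO⟩) := by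
    intro f X m hm
    obtain ⟨W, inl, inr, hPO⟩ := hpo f.hom m hm
    refine ⟨W, inl, inr, hstable f.hom m inl inr hm hPO, hPO, ?_⟩
    intro e'' α g hg
    have hsrc : α.src = m ≫ g.1 := congrArg Subtype.val hg
    have w : f.hom ≫ α.tgt = m ≫ (g.1 ≫ e''.hom) := by
      rw [α.isPO.w, hsrc]; exact Category.assoc _ _ _
    set t : W ⟶ e''.cod := hPO.desc α.tgt (g.1 ≫ e''.hom) w with ht
    have hbig : IsPushout f.hom (m ≫ g.1) α.tgt e''.hom := hsrc ▸ α.isPO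
    have botPO : IsPushout inr g.1 t e''.hom := by
      exact hbig.of_top' hPO
    have htM : M.P t := hstable inr g.1 t e''.hom g.2 botPO
    refine ⟨⟨g.1, t, g.2, htM, botPO⟩, ⟨?_, ?_⟩, ?_⟩
    · exact POvHom.ext hsrc.symm (hPO.inl_desc _ _ _)
    · rfl
    · rintro β' ⟨hcomp, hmap⟩
      have hs : β'.src = g.1 := congrArg Subtype.val hmap
      refine POvHom.ext hs ?_
      apply hPO.hom_ext
      · have htgt : inl ≫ β'.tgt = α.tgt := congrArg POvHom.tgt hcomp
        show inl ≫ β'.tgt = inl ≫ t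
        rw [htgt, ht, hPO.inl_desc]
      · show inr ≫ β'.tgt = inr ≫ t
        rw [β'.isPO.w, hs, ht, hPO.inr_desc]; rfl
  refine ⟨?_, key⟩
  intro e b' fm
  obtain ⟨W, inl, inr, hinl, hPO, hcart⟩ := key e fm.1 fm.2
  exact ⟨⟨(show C from b'), W, inr⟩, ⟨fm.1, inl, fm.2, hinl, hPO⟩, rfl,
    by exact Subtype.ext (Category.comp_id fm.1), hcart⟩
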